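/- arXiv:2410.02260 — 2 statements merged into one kernel-verified Lean document; each statement's English description precedes it below -/
import Mathlib

section
/- Let δ_1, …, δ_N ∈ ℝ^d be fixed vectors, let δ̄ = (1/N) ∑_{n=1}^N δ_n, and consider the FedScalar aggregation update d_x = (1/N)·(∑_{n=1}^N ⟨δ_n, v⟩)·v = ⟨δ̄, v⟩ v. Let Var[d_x] = E[d_x d_xᵀ] − E[d_x] E[d_x]ᵀ denote its covariance matrix. Then Var[d_x] computed with v a standard Gaussian random vector minus Var[d_x] computed with v a Rademacher random vector equals 2·diag(δ̄_1², …, δ̄_d²); in particular this difference is a positive semidefinite matrix with trace 2‖δ̄‖², so sampling v from the Rademacher distribution instead of the Gaussian distribution reduces the variance of the aggregation step of FedScalar. -/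
open MeasureTheory ProbabilityTheory

/-- The Rademacher law on `ℝ`: `±1` each with probability `1/2`. -/
noncomputable def rademacherLaw : Measure ℝ :=
  ((1 : ENNReal) / 2) • Measure.dirac (1 : ℝ) + ((1 : ENNReal) / 2) • Measure.dirac (-1 : ℝ)

set_option linter.unusedSectionVars false

section Aux
open Real
open scoped NNReal ENNReal

noncomputable def gK : ℝ → ℝ := fun x => Real.exp (-x^2/2)

lemma integrable_pow_gK (n : ℕ) : Integrable (fun x : ℝ => x ^ n * gK x) := by
  have hg : Integrable (fun x : ℝ => (n.factorial * Real.exp 1) * Real.exp (-(1/4) * x^2)) :=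
    (integrable_exp_neg_mul_sq (by norm_num)).const_mul _
  refine hg.mono' ?_ (Filter.Eventually.of_forall fun x => ?_)
  · exact ((measurable_id.pow_const n).mul (Measurable.exp (by fun_prop))).aestronglyMeasurable
  · rw [Real.norm_eq_abs, abs_mul]
    rw [show |gK x| = gK x from abs_of_nonneg (Real.exp_pos _).le]
    have h1 : |x| ^ n ≤ n.factorial * Real.exp |x| := by
      have := Real.pow_div_factorial_le_exp |x| (abs_nonneg x) n
      rw [div_le_iff₀ (by positivity)] at this
      linarith [this]
    have h2 : |x ^ n| = |x| ^ n := abs_pow x n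
    rw [h2, gK]
    calc |x| ^ n * Real.exp (-x^2/2) ≤ (n.factorial * Real.exp |x|) * Real.exp (-x^2/2) := by
          apply mul_le_mul_of_nonneg_right h1 (Real.exp_pos _).le
      _ = n.factorial * Real.exp (|x| + -x^2/2) := by rw [mul_assoc, ← Real.exp_add]
      _ ≤ n.factorial * Real.exp (1 + -(1/4) * x^2) := by
          apply mul_le_mul_of_nonneg_left ((Real.exp_le_exp).2 ?_) (by positivity)
          nlinarith [sq_nonneg (|x| - 2), sq_abs x]
      _ = (n.factorial * Real.exp 1) * Real.exp (-(1/4) * x^2) := by rw [Real.exp_add, mul_assoc]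

lemma J0 : ∫ x : ℝ, gK x = √(2 * π) := by
  have := integral_gaussian (1/2)
  have h : ∀ x : ℝ, gK x = Real.exp (-(1/2) * x^2) := fun x => by rw [gK]; ring_nf
  simp_rw [h]
  rw [this]
  rw [show π / (1/2 : ℝ) = 2 * π by ring]

lemma hasDerivAt_gK (x : ℝ) : HasDerivAt gK (-x * gK x) x := by
  have h1 : HasDerivAt (fun x : ℝ => -x^2/2) (-x) x := by
    have := ((hasDerivAt_pow 2 x).neg.div_const 2)
    refine this.congr_deriv ?_
    simp
    ring
  have := h1.exp
  refine this.congr_deriv ?_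
  unfold gK
  ring

lemma hasDerivAt_pow_gK (k : ℕ) (x : ℝ) :
    HasDerivAt (fun x => x ^ k * gK x) ((k * x ^ (k-1) - x^(k+1)) * gK x) x := by
  have := (hasDerivAt_pow k x).mul (hasDerivAt_gK x)
  refine this.congr_deriv ?_
  unfold gK
  ring_nf

noncomputable def Jg (n : ℕ) : ℝ := ∫ x : ℝ, x ^ n * gK x

lemma Jrec (k : ℕ) : (k : ℝ) * Jg (k-1) - Jg (k+1) = 0 := by
  have h0 : ∫ x : ℝ, ((k : ℝ) * x ^ (k-1) - x^(k+1)) * gK x = 0 :=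
    integral_eq_zero_of_hasDerivAt_of_integrable (hasDerivAt_pow_gK k)
      (by
        have : (fun x : ℝ => ((k : ℝ) * x ^ (k-1) - x^(k+1)) * gK x)
            = fun x : ℝ => (k : ℝ) * (x ^ (k-1) * gK x) - x^(k+1) * gK x := by
          funext x; ring
        rw [this]
        exact ((integrable_pow_gK (k-1)).const_mul _).sub (integrable_pow_gK (k+1)))
      (integrable_pow_gK k)
  have h1 : ∫ x : ℝ, ((k : ℝ) * x ^ (k-1) - x^(k+1)) * gK x
      = (k : ℝ) * Jg (k-1) - Jg (k+1) := by
    rw [Jg, Jg, ← integral_const_mul, ← integral_sub (((integrable_pow_gK (k-1)).const_mul _)) (integrable_pow_gK (k+1))]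
    congr 1; funext x; ring
  rw [← h1, h0]

lemma Jg0 : Jg 0 = √(2 * π) := by rw [Jg]; simpa using J0
lemma Jg1 : Jg 1 = 0 := by have := Jrec 0; simpa [Jg] using this
lemma Jg2 : Jg 2 = √(2 * π) := by have := Jrec 1; simp at this; rw [← Jg0]; linarith [this]
lemma Jg3 : Jg 3 = 0 := by have := Jrec 2; rw [show (2:ℕ)-1 = 1 by rfl, Jg1] at this; norm_num at this; linarith
lemma Jg4 : Jg 4 = 3 * √(2 * π) := by
  have := Jrec 3; rw [show (3:ℕ)-1 = 2 by rfl, Jg2] at this; norm_num at this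
  rw [show √(2*π) = √2*√π from Real.sqrt_mul (by norm_num) π]; linarith

lemma gK_meas : Measurable gK := by unfold gK; fun_prop

noncomputable def gDen : ℝ → ℝ≥0 := fun x => ((√(2*π))⁻¹ * gK x).toNNReal

lemma gDen_meas : Measurable gDen := by
  apply measurable_real_toNNReal.comp
  exact gK_meas.const_mul _

lemma gauss_eq : gaussianReal 0 1 = (volume : Measure ℝ).withDensity (fun x => (gDen x : ℝ≥0∞)) := by
  rw [gaussianReal_of_var_ne_zero 0 (by norm_num)]
  congr 1
  funext x
  rw [gaussianPDF]
  congr 1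
  unfold gaussianPDFReal gK
  norm_num

lemma gDen_smul (x r : ℝ) : (gDen x : ℝ) * r = (√(2*π))⁻¹ * (gK x * r) := by
  rw [gDen, Real.coe_toNNReal _ (by unfold gK; positivity), mul_assoc]

lemma integral_gauss (f : ℝ → ℝ) : ∫ x, f x ∂(gaussianReal 0 1) = (√(2*π))⁻¹ * ∫ x, gK x * f x := by
  rw [gauss_eq, integral_withDensity_eq_integral_smul gDen_meas]
  simp_rw [NNReal.smul_def, smul_eq_mul, gDen_smul]
  rw [integral_const_mul]

lemma integrable_pow_gauss (n : ℕ) : Integrable (fun x : ℝ => x ^ n) (gaussianReal 0 1) := by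
  rw [gauss_eq, integrable_withDensity_iff_integrable_smul gDen_meas]
  simp_rw [NNReal.smul_def, smul_eq_mul, gDen_smul]
  apply Integrable.const_mul
  have := integrable_pow_gK n
  apply this.congr
  filter_upwards with x
  ring

lemma sqrt2pi_ne : (√(2*π)) ≠ 0 := by positivity

lemma moment_gauss (n : ℕ) : ∫ x, x ^ n ∂(gaussianReal 0 1) = (√(2*π))⁻¹ * Jg n := by
  rw [integral_gauss, Jg]
  congr 1
  apply integral_congr_ae
  filter_upwards with x
  ring

lemma moment_gauss1 : ∫ x, x ^ 1 ∂(gaussianReal 0 1) = 0 := by rw [moment_gauss, Jg1]; simp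
lemma moment_gauss2 : ∫ x, x ^ 2 ∂(gaussianReal 0 1) = 1 := by
  rw [moment_gauss, Jg2, inv_mul_cancel₀ sqrt2pi_ne]
lemma moment_gauss3 : ∫ x, x ^ 3 ∂(gaussianReal 0 1) = 0 := by rw [moment_gauss, Jg3]; simp
lemma moment_gauss4 : ∫ x, x ^ 4 ∂(gaussianReal 0 1) = 3 := by
  rw [moment_gauss, Jg4, ← mul_assoc, mul_comm ((√(2*π))⁻¹) 3, mul_assoc, inv_mul_cancel₀ sqrt2pi_ne, mul_one]

lemma integrable_dirac'' {f : ℝ → ℝ} (hf : Measurable f) (a : ℝ) :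
    Integrable f (Measure.dirac a) := by
  refine ⟨hf.aestronglyMeasurable, ?_⟩
  rw [HasFiniteIntegral, lintegral_dirac' a (by fun_prop)]
  exact ENNReal.coe_lt_top

lemma integrable_rad (f : ℝ → ℝ) (hf : Measurable f) : Integrable f rademacherLaw := by
  rw [rademacherLaw]
  refine Integrable.add_measure ?_ ?_
  · exact (integrable_dirac'' hf _).smul_measure (by norm_num)
  · exact (integrable_dirac'' hf _).smul_measure (by norm_num)

lemma integral_rad (f : ℝ → ℝ) (hf : Measurable f) :
    ∫ x, f x ∂rademacherLaw = (f 1 + f (-1)) / 2 := by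
  rw [rademacherLaw, integral_add_measure
      ((integrable_dirac'' hf _).smul_measure (by norm_num))
      ((integrable_dirac'' hf _).smul_measure (by norm_num)),
    integral_smul_measure, integral_smul_measure,
    integral_dirac f _, integral_dirac f _]
  norm_num
  ring

lemma moment_rad (n : ℕ) : ∫ x, x ^ n ∂rademacherLaw = (1 + (-1:ℝ)^n)/2 := by
  rw [integral_rad (fun x => x ^ n) (measurable_id.pow_const n)]
  norm_num

section Framework
variable {Ω : Type*} [MeasurableSpace Ω] {μ : Measure Ω} [IsProbabilityMeasure μ]
  {d : ℕ} {X : Fin d → Ω → ℝ}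

theorem prodInt (hmeas : ∀ i, Measurable (X i))
    (hindep : iIndepFun X μ)
    (e : Fin d → ℕ) (s : Finset (Fin d)) :
    ∫ ω, ∏ t ∈ s, X t ω ^ e t ∂μ = ∏ t ∈ s, ∫ ω, X t ω ^ e t ∂μ := by
  classical
  induction s using Finset.induction_on with
  | empty => simp
  | @insert a s ha ih =>
    have hY : iIndepFun (fun t => fun ω => X t ω ^ e t) μ :=
      hindep.comp (fun t x => x ^ e t) (fun t => measurable_id.pow_const _)
    have hI : IndepFun (fun ω => ∏ t ∈ s, X t ω ^ e t) (fun ω => X a ω ^ e a) μ := by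
      have h := hY.indepFun_finsetProd_of_notMem
        (fun t => (hmeas t).pow_const _) ha
      convert h using 1
      funext ω
      simp [Finset.prod_apply]
    have hmul := hI.integral_fun_mul_eq_mul_integral
      (Finset.aestronglyMeasurable_fun_prod _ (fun t _ => ((hmeas t).pow_const _).aestronglyMeasurable))
      ((hmeas a).pow_const _).aestronglyMeasurable
    calc ∫ ω, ∏ t ∈ insert a s, X t ω ^ e t ∂μ
        = ∫ ω, (∏ t ∈ s, X t ω ^ e t) * X a ω ^ e a ∂μ := by
          congr 1; funext ω; rw [Finset.prod_insert ha]; ring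
      _ = (∫ ω, ∏ t ∈ s, X t ω ^ e t ∂μ) * ∫ ω, X a ω ^ e a ∂μ := hmul
      _ = ∏ t ∈ insert a s, ∫ ω, X t ω ^ e t ∂μ := by
          rw [Finset.prod_insert ha, ih]; ring

theorem H2 (hmeas : ∀ i, Measurable (X i))
    (hindep : iIndepFun X μ)
    {p q : Fin d} (hpq : p ≠ q) (a b : ℕ) :
    ∫ ω, X p ω ^ a * X q ω ^ b ∂μ = (∫ ω, X p ω ^ a ∂μ) * (∫ ω, X q ω ^ b ∂μ) := by
  have h := prodInt hmeas hindep (fun t => if t = p then a else b) ({p, q} : Finset (Fin d))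
  simpa [Finset.prod_pair hpq, hpq.symm] using h

theorem H3 (hmeas : ∀ i, Measurable (X i))
    (hindep : iIndepFun X μ)
    {p q r : Fin d} (hpq : p ≠ q) (hpr : p ≠ r) (hqr : q ≠ r) (a b c : ℕ) :
    ∫ ω, X p ω ^ a * X q ω ^ b * X r ω ^ c ∂μ
      = (∫ ω, X p ω ^ a ∂μ) * (∫ ω, X q ω ^ b ∂μ) * (∫ ω, X r ω ^ c ∂μ) := by
  have h := prodInt hmeas hindep (fun t => if t = p then a else if t = q then b else c)
    ({p, q, r} : Finset (Fin d))
  rw [show ({p, q, r} : Finset (Fin d)) = insert p (insert q {r}) from rfl] at h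
  rw [Finset.prod_insert (by simp [hpq, hpr]), Finset.prod_insert (by simp [hqr]),
    Finset.prod_singleton] at h
  simp only [if_true, if_pos rfl, if_neg hpq.symm, if_neg hpr.symm, if_neg hqr.symm] at h
  calc ∫ ω, X p ω ^ a * X q ω ^ b * X r ω ^ c ∂μ
      = ∫ ω, ∏ t ∈ ({p, q, r} : Finset (Fin d)),
          X t ω ^ (if t = p then a else if t = q then b else c) ∂μ := by
        congr 1; funext ω
        rw [Finset.prod_insert (by simp [hpq, hpr]), Finset.prod_insert (by simp [hqr]),
          Finset.prod_singleton]
        simp only [if_true, if_pos rfl, if_neg hpq.symm, if_neg hpr.symm, if_neg hqr.symm]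
        ring
    _ = _ := by rw [h]; ring

theorem H4 (hmeas : ∀ i, Measurable (X i))
    (hindep : iIndepFun X μ)
    {p q r s : Fin d} (hpq : p ≠ q) (hpr : p ≠ r) (hps : p ≠ s)
    (hqr : q ≠ r) (hqs : q ≠ s) (hrs : r ≠ s) :
    ∫ ω, X p ω * X q ω * X r ω * X s ω ∂μ
      = (∫ ω, X p ω ∂μ) * (∫ ω, X q ω ∂μ) * (∫ ω, X r ω ∂μ) * (∫ ω, X s ω ∂μ) := by
  have h := prodInt hmeas hindep (fun _ => 1) ({p, q, r, s} : Finset (Fin d))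
  rw [show ({p, q, r, s} : Finset (Fin d)) = insert p (insert q (insert r {s})) from rfl] at h
  rw [Finset.prod_insert (by simp [hpq, hpr, hps]), Finset.prod_insert (by simp [hqr, hqs]),
    Finset.prod_insert (by simp [hrs]), Finset.prod_singleton] at h
  simp only [pow_one] at h
  calc ∫ ω, X p ω * X q ω * X r ω * X s ω ∂μ
      = ∫ ω, ∏ t ∈ ({p, q, r, s} : Finset (Fin d)), X t ω ^ (1 : ℕ) ∂μ := by
        congr 1; funext ω
        rw [Finset.prod_insert (by simp [hpq, hpr, hps]), Finset.prod_insert (by simp [hqr, hqs]),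
          Finset.prod_insert (by simp [hrs]), Finset.prod_singleton]
        simp only [pow_one]
        ring
    _ = _ := by simp only [pow_one]; rw [h]; ring

end Framework

section Framework2
variable {Ω : Type*} [MeasurableSpace Ω] {μ : Measure Ω} [IsProbabilityMeasure μ]
  {d : ℕ} {X : Fin d → Ω → ℝ} {m4 : ℝ}

theorem quad_diag (hmeas : ∀ i, Measurable (X i))
    (hindep : iIndepFun X μ)
    (hmom1 : ∀ i, ∫ ω, X i ω ∂μ = 0)
    (hmom2 : ∀ i, ∫ ω, X i ω ^ 2 ∂μ = 1)
    (hmom3 : ∀ i, ∫ ω, X i ω ^ 3 ∂μ = 0)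
    (hmom4 : ∀ i, ∫ ω, X i ω ^ 4 ∂μ = m4)
    (i k l : Fin d) :
    ∫ ω, X k ω * X i ω * X l ω * X i ω ∂μ
      = if k = l then (if k = i then m4 else 1) else 0 := by
  by_cases hk : k = i
  · subst hk
    by_cases hl : l = k
    · subst hl
      rw [if_pos rfl, if_pos rfl, show (fun ω => X l ω * X l ω * X l ω * X l ω)
        = fun ω => X l ω ^ 4 from funext fun ω => by ring]
      exact hmom4 l
    · rw [if_neg (Ne.symm hl), show (fun ω => X k ω * X k ω * X l ω * X k ω)
        = fun ω => X k ω ^ 3 * X l ω ^ 1 from funext fun ω => by ring,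
        H2 hmeas hindep (Ne.symm hl) 3 1, hmom3]
      ring
  · by_cases hl : l = i
    · rw [hl, if_neg hk, show (fun ω => X k ω * X i ω * X i ω * X i ω)
        = fun ω => X i ω ^ 3 * X k ω ^ 1 from funext fun ω => by ring,
        H2 hmeas hindep (fun h => hk h.symm) 3 1, hmom3]
      ring
    · by_cases hkl : k = l
      · subst hkl
        rw [if_pos rfl, if_neg hk, show (fun ω => X k ω * X i ω * X k ω * X i ω)
          = fun ω => X k ω ^ 2 * X i ω ^ 2 from funext fun ω => by ring,
          H2 hmeas hindep hk 2 2, hmom2, hmom2]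
        ring
      · rw [if_neg hkl, show (fun ω => X k ω * X i ω * X l ω * X i ω)
          = fun ω => X k ω ^ 1 * X l ω ^ 1 * X i ω ^ 2 from funext fun ω => by ring,
          H3 hmeas hindep hkl hk hl 1 1 2]
        simp only [pow_one, hmom1, zero_mul, mul_zero]
end Framework2

section Framework3
variable {Ω : Type*} [MeasurableSpace Ω] {μ : Measure Ω} [IsProbabilityMeasure μ]
  {d : ℕ} {X : Fin d → Ω → ℝ} {m4 : ℝ}

theorem quad_off (hmeas : ∀ i, Measurable (X i))
    (hindep : iIndepFun X μ)
    (hmom1 : ∀ i, ∫ ω, X i ω ∂μ = 0)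
    (hmom2 : ∀ i, ∫ ω, X i ω ^ 2 ∂μ = 1)
    (hmom3 : ∀ i, ∫ ω, X i ω ^ 3 ∂μ = 0)
    {i j : Fin d} (hij : i ≠ j) (k l : Fin d) :
    ∫ ω, X k ω * X i ω * X l ω * X j ω ∂μ
      = if (k = i ∧ l = j) ∨ (k = j ∧ l = i) then 1 else 0 := by
  by_cases hk1 : k = i
  · subst hk1
    by_cases hl1 : l = j
    · subst hl1
      rw [if_pos (Or.inl ⟨rfl, rfl⟩), show (fun ω => X k ω * X k ω * X l ω * X l ω)
        = fun ω => X k ω ^ 2 * X l ω ^ 2 from funext fun ω => by ring,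
        H2 hmeas hindep hij 2 2, hmom2, hmom2]
      ring
    · by_cases hl2 : l = k
      · rw [hl2, if_neg (by simp [hij]),
          show (fun ω => X k ω * X k ω * X k ω * X j ω)
          = fun ω => X k ω ^ 3 * X j ω ^ 1 from funext fun ω => by ring,
          H2 hmeas hindep hij 3 1, hmom3]
        ring
      · rw [if_neg (by simp [hl1, hij]), show (fun ω => X k ω * X k ω * X l ω * X j ω)
          = fun ω => X l ω ^ 1 * X j ω ^ 1 * X k ω ^ 2 from funext fun ω => by ring,
          H3 hmeas hindep hl1 hl2 (Ne.symm hij) 1 1 2]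
        simp only [pow_one, hmom1, zero_mul, mul_zero]
  · by_cases hk2 : k = j
    · subst hk2
      by_cases hl1 : l = i
      · subst hl1
        rw [if_pos (Or.inr ⟨rfl, rfl⟩), show (fun ω => X k ω * X l ω * X l ω * X k ω)
          = fun ω => X l ω ^ 2 * X k ω ^ 2 from funext fun ω => by ring,
          H2 hmeas hindep hij 2 2, hmom2, hmom2]
        ring
      · by_cases hl2 : l = k
        · rw [hl2, if_neg (by simp [hk1]),
            show (fun ω => X k ω * X i ω * X k ω * X k ω)
            = fun ω => X k ω ^ 3 * X i ω ^ 1 from funext fun ω => by ring,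
            H2 hmeas hindep (Ne.symm hij) 3 1, hmom3]
          ring
        · rw [if_neg (by simp [hk1, hl1]),
            show (fun ω => X k ω * X i ω * X l ω * X k ω)
            = fun ω => X i ω ^ 1 * X l ω ^ 1 * X k ω ^ 2 from funext fun ω => by ring,
            H3 hmeas hindep (fun h => hl1 h.symm) hij hl2 1 1 2]
          simp only [pow_one, hmom1, zero_mul, mul_zero]
    · by_cases hl1 : l = i
      · rw [hl1, if_neg (by simp [hk1, hk2]),
          show (fun ω => X k ω * X i ω * X i ω * X j ω)
          = fun ω => X k ω ^ 1 * X j ω ^ 1 * X i ω ^ 2 from funext fun ω => by ring,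
          H3 hmeas hindep (fun h => hk2 h) hk1 hij.symm 1 1 2]
        simp only [pow_one, hmom1, zero_mul, mul_zero]
      · by_cases hl2 : l = j
        · rw [hl2, if_neg (by simp [hk1, hk2]),
            show (fun ω => X k ω * X i ω * X j ω * X j ω)
            = fun ω => X k ω ^ 1 * X i ω ^ 1 * X j ω ^ 2 from funext fun ω => by ring,
            H3 hmeas hindep hk1 hk2 hij 1 1 2]
          simp only [pow_one, hmom1, zero_mul, mul_zero]
        · by_cases hkl : k = l
          · rw [← hkl, if_neg (by simp [hk1, hk2]),
              show (fun ω => X k ω * X i ω * X k ω * X j ω)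
              = fun ω => X i ω ^ 1 * X j ω ^ 1 * X k ω ^ 2 from funext fun ω => by ring,
              H3 hmeas hindep hij (Ne.symm hk1) (Ne.symm hk2) 1 1 2]
            simp only [pow_one, hmom1, zero_mul, mul_zero]
          · rw [if_neg (by simp [hk1, hk2, hl1, hl2]),
              H4 hmeas hindep hk1 hkl hk2 (Ne.symm hl1) hij hl2, hmom1]
            simp
end Framework3

section Framework4
variable {Ω : Type*} [MeasurableSpace Ω] {μ : Measure Ω} [IsProbabilityMeasure μ]
  {d : ℕ} {X : Fin d → Ω → ℝ} {m4 : ℝ}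

theorem int2 (hmeas : ∀ i, Measurable (X i))
    (hint : ∀ i (n : ℕ), Integrable (fun ω => X i ω ^ n) μ) (k i : Fin d) :
    Integrable (fun ω => X k ω * X i ω) μ := by
  refine (((hint k 2).add (hint i 2)).div_const 2).mono'
    (((hmeas k).mul (hmeas i)).aestronglyMeasurable)
    (Filter.Eventually.of_forall fun ω => ?_)
  simp only [Pi.add_apply]
  rw [Real.norm_eq_abs, abs_mul]
  nlinarith [sq_nonneg (|X k ω| - |X i ω|), sq_abs (X k ω), sq_abs (X i ω),
    abs_nonneg (X k ω), abs_nonneg (X i ω)]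

theorem int4 (hmeas : ∀ i, Measurable (X i))
    (hint : ∀ i (n : ℕ), Integrable (fun ω => X i ω ^ n) μ) (k i l j : Fin d) :
    Integrable (fun ω => X k ω * X i ω * X l ω * X j ω) μ := by
  refine ((((hint k 4).add (hint i 4)).add ((hint l 4).add (hint j 4))).div_const 4).mono'
    (((((hmeas k).mul (hmeas i)).mul (hmeas l)).mul (hmeas j)).aestronglyMeasurable)
    (Filter.Eventually.of_forall fun ω => ?_)
  simp only [Pi.add_apply]
  have h4 : ∀ x : ℝ, x ^ 4 = |x| ^ 4 := fun x => by
    rw [show (4:ℕ) = 2*2 from rfl, pow_mul, pow_mul, sq_abs]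
  rw [Real.norm_eq_abs, abs_mul, abs_mul, abs_mul, h4 (X k ω), h4 (X i ω), h4 (X l ω), h4 (X j ω)]
  have ha : 0 ≤ |X k ω| := abs_nonneg _
  have hb : 0 ≤ |X i ω| := abs_nonneg _
  have hc : 0 ≤ |X l ω| := abs_nonneg _
  have he : 0 ≤ |X j ω| := abs_nonneg _
  nlinarith [sq_nonneg (|X k ω| * |X i ω| - |X l ω| * |X j ω|), sq_nonneg (|X k ω|^2 - |X i ω|^2),
    sq_nonneg (|X l ω|^2 - |X j ω|^2), mul_nonneg ha hb, mul_nonneg hc he,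
    sq_nonneg (|X k ω| * |X i ω| + |X l ω| * |X j ω|)]

theorem meanL (hmeas : ∀ i, Measurable (X i))
    (hindep : iIndepFun X μ)
    (hint : ∀ i (n : ℕ), Integrable (fun ω => X i ω ^ n) μ)
    (hmom1 : ∀ i, ∫ ω, X i ω ∂μ = 0)
    (hmom2 : ∀ i, ∫ ω, X i ω ^ 2 ∂μ = 1)
    (a : Fin d → ℝ) (i : Fin d) :
    ∫ ω, (∑ k, a k * X k ω) * X i ω ∂μ = a i := by
  rw [show (fun ω => (∑ k, a k * X k ω) * X i ω)
      = fun ω => ∑ k, a k * (X k ω * X i ω) from funext fun ω => by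
        rw [Finset.sum_mul]; exact Finset.sum_congr rfl fun k _ => by ring]
  rw [integral_finset_sum _ (fun k _ => (int2 hmeas hint k i).const_mul _)]
  simp_rw [integral_const_mul]
  rw [Finset.sum_eq_single i]
  · rw [show (fun ω => X i ω * X i ω) = fun ω => X i ω ^ 2 from funext fun ω => by ring,
      hmom2, mul_one]
  · intro k _ hk
    rw [show (fun ω => X k ω * X i ω) = fun ω => X k ω * X i ω from rfl,
      (hindep.indepFun hk).integral_fun_mul_eq_mul_integral (hmeas k).aestronglyMeasurable
        (hmeas i).aestronglyMeasurable, hmom1, hmom1]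
    ring
  · intro h
    exact absurd (Finset.mem_univ i) h
end Framework4

section Framework5
variable {Ω : Type*} [MeasurableSpace Ω] {μ : Measure Ω} [IsProbabilityMeasure μ]
  {d : ℕ} {X : Fin d → Ω → ℝ} {m4 : ℝ}

theorem covL (hmeas : ∀ i, Measurable (X i))
    (hindep : iIndepFun X μ)
    (hint : ∀ i (n : ℕ), Integrable (fun ω => X i ω ^ n) μ)
    (hmom1 : ∀ i, ∫ ω, X i ω ∂μ = 0)
    (hmom2 : ∀ i, ∫ ω, X i ω ^ 2 ∂μ = 1)
    (hmom3 : ∀ i, ∫ ω, X i ω ^ 3 ∂μ = 0)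
    (hmom4 : ∀ i, ∫ ω, X i ω ^ 4 ∂μ = m4)
    (a : Fin d → ℝ) (i j : Fin d) :
    ∫ ω, ((∑ k, a k * X k ω) * X i ω) * ((∑ l, a l * X l ω) * X j ω) ∂μ
      = if i = j then (∑ k, a k ^ 2) + (m4 - 1) * a i ^ 2 else 2 * (a i * a j) := by
  rw [show (fun ω => ((∑ k, a k * X k ω) * X i ω) * ((∑ l, a l * X l ω) * X j ω))
      = fun ω => ∑ k, ∑ l, (a k * a l) * (X k ω * X i ω * X l ω * X j ω) from
    funext fun ω => by
      calc (∑ k, a k * X k ω) * X i ω * ((∑ l, a l * X l ω) * X j ω)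
          = (∑ k, a k * X k ω) * (∑ l, a l * X l ω) * (X i ω * X j ω) := by ring
        _ = (∑ k, ∑ l, (a k * X k ω) * (a l * X l ω)) * (X i ω * X j ω) := by
            rw [Finset.sum_mul_sum]
        _ = ∑ k, ∑ l, (a k * a l) * (X k ω * X i ω * X l ω * X j ω) := by
            rw [Finset.sum_mul]
            refine Finset.sum_congr rfl fun k _ => ?_
            rw [Finset.sum_mul]
            exact Finset.sum_congr rfl fun l _ => by ring]
  rw [integral_finset_sum _ (fun k _ => integrable_finset_sum _
    (fun l _ => (int4 hmeas hint k i l j).const_mul _))]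
  have hswap : ∀ k, ∫ ω, ∑ l, (a k * a l) * (X k ω * X i ω * X l ω * X j ω) ∂μ
      = ∑ l, (a k * a l) * ∫ ω, X k ω * X i ω * X l ω * X j ω ∂μ := by
    intro k
    rw [integral_finset_sum _ (fun l _ => (int4 hmeas hint k i l j).const_mul _)]
    exact Finset.sum_congr rfl fun l _ => integral_const_mul _ _
  simp_rw [hswap]
  by_cases hij : i = j
  · subst hij
    rw [if_pos rfl]
    have hval : ∀ k l, ∫ ω, X k ω * X i ω * X l ω * X i ω ∂μ
        = if k = l then (if k = i then m4 else 1) else 0 :=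
      quad_diag hmeas hindep hmom1 hmom2 hmom3 hmom4 i
    simp_rw [hval, mul_ite, mul_one, mul_zero, Finset.sum_ite_eq]
    simp only [Finset.mem_univ, if_true]
    have hthis : ∀ k : Fin d, (if k = i then a k * a k * m4 else a k * a k)
        = a k ^ 2 + (if k = i then (m4 - 1) * a k ^ 2 else 0) := by
      intro k
      by_cases h : k = i <;> simp [h] <;> ring
    rw [Finset.sum_congr rfl (fun k _ => hthis k), Finset.sum_add_distrib,
      Finset.sum_ite_eq' Finset.univ i (fun k => (m4 - 1) * a k ^ 2)]
    simp
  · rw [if_neg hij]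
    have hval : ∀ k l, ∫ ω, X k ω * X i ω * X l ω * X j ω ∂μ
        = if (k = i ∧ l = j) ∨ (k = j ∧ l = i) then 1 else 0 :=
      quad_off hmeas hindep hmom1 hmom2 hmom3 hij
    simp_rw [hval]
    have hsplit : ∀ k l : Fin d, (a k * a l) * (if (k = i ∧ l = j) ∨ (k = j ∧ l = i) then (1:ℝ) else 0)
        = (if k = i then a k else 0) * (if l = j then a l else 0)
          + (if k = j then a k else 0) * (if l = i then a l else 0) := by
      intro k l
      by_cases h1 : k = i <;> by_cases h2 : l = j <;> by_cases h3 : k = j <;>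
        by_cases h4 : l = i <;> simp_all <;> ring
    simp_rw [hsplit]
    have h1 : ∀ b : Fin d, ∑ l, (if l = b then a l else 0) = a b := fun b => by
      rw [Finset.sum_ite_eq' Finset.univ b a]
      simp
    calc ∑ k, ∑ l, ((if k = i then a k else 0) * (if l = j then a l else 0)
            + (if k = j then a k else 0) * (if l = i then a l else 0))
        = ∑ k, ((if k = i then a k else 0) * a j + (if k = j then a k else 0) * a i) := by
          refine Finset.sum_congr rfl fun k _ => ?_
          rw [Finset.sum_add_distrib, ← Finset.mul_sum, ← Finset.mul_sum, h1 j, h1 i]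
      _ = a i * a j + a j * a i := by
          rw [Finset.sum_add_distrib, ← Finset.sum_mul, ← Finset.sum_mul, h1 i, h1 j]
      _ = 2 * (a i * a j) := by ring
end Framework5

end Aux

section Transfer
variable {Ω : Type*} [MeasurableSpace Ω] {μ : Measure Ω} {f : Ω → ℝ} {ν : Measure ℝ}

lemma transfer_int (hf : Measurable f) (hmap : μ.map f = ν) (n : ℕ)
    (hν : Integrable (fun x => x ^ n) ν) : Integrable (fun ω => f ω ^ n) μ := by
  have h := (integrable_map_measure (μ := μ) (f := f) (g := fun x : ℝ => x ^ n)
      (measurable_id.pow_const n).aestronglyMeasurable hf.aemeasurable).1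
  rw [hmap] at h
  exact h hν

lemma transfer_mom (hf : Measurable f) (hmap : μ.map f = ν) (n : ℕ) :
    ∫ ω, f ω ^ n ∂μ = ∫ x, x ^ n ∂ν := by
  rw [← hmap]
  exact (integral_map hf.aemeasurable
    (measurable_id.pow_const n).aestronglyMeasurable).symm

end Transfer

/-- **Variance reduction by Rademacher sampling in the FedScalar aggregation step.** -/
theorem fedscalar_variance_reduction
    {Ω₁ Ω₂ : Type*} [MeasurableSpace Ω₁] [MeasurableSpace Ω₂]
    (μ₁ : Measure Ω₁) [IsProbabilityMeasure μ₁]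
    (μ₂ : Measure Ω₂) [IsProbabilityMeasure μ₂]
    (d N : ℕ)
    (vG : Ω₁ → EuclideanSpace ℝ (Fin d)) (vR : Ω₂ → EuclideanSpace ℝ (Fin d))
    (hGmeas : ∀ i, Measurable fun ω => vG ω i)
    (hGindep : iIndepFun (fun i ω => vG ω i) μ₁)
    (hGgauss : ∀ i, μ₁.map (fun ω => vG ω i) = gaussianReal 0 1)
    (hRmeas : ∀ i, Measurable fun ω => vR ω i)
    (hRindep : iIndepFun (fun i ω => vR ω i) μ₂)
    (hRrad : ∀ i, μ₂.map (fun ω => vR ω i) = rademacherLaw)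
    (δ : Fin N → EuclideanSpace ℝ (Fin d))
    (δbar : EuclideanSpace ℝ (Fin d)) (hδbar : δbar = (1 / (N : ℝ)) • ∑ n, δ n)
    (dG : Ω₁ → EuclideanSpace ℝ (Fin d))
    (hdG : ∀ ω, dG ω = ((1 / (N : ℝ)) * ∑ n, (inner ℝ (δ n) (vG ω) : ℝ)) • vG ω)
    (dR : Ω₂ → EuclideanSpace ℝ (Fin d))
    (hdR : ∀ ω, dR ω = ((1 / (N : ℝ)) * ∑ n, (inner ℝ (δ n) (vR ω) : ℝ)) • vR ω)
    (VarG VarR : Matrix (Fin d) (Fin d) ℝ)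
    (hVarG : VarG = Matrix.of fun i j =>
      (∫ ω, dG ω i * dG ω j ∂μ₁) - (∫ ω, dG ω i ∂μ₁) * (∫ ω, dG ω j ∂μ₁))
    (hVarR : VarR = Matrix.of fun i j =>
      (∫ ω, dR ω i * dR ω j ∂μ₂) - (∫ ω, dR ω i ∂μ₂) * (∫ ω, dR ω j ∂μ₂)) :
    VarG - VarR = Matrix.diagonal (fun i => 2 * δbar i ^ 2) ∧
      (VarG - VarR).PosSemidef ∧
      (VarG - VarR).trace = 2 * ‖δbar‖ ^ 2 := by
  classical
  set a : Fin d → ℝ := fun i => δbar i with ha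
  -- coordinates of δbar
  have hbar : ∀ k : Fin d, a k = (1 / (N : ℝ)) * ∑ n, δ n k := by
    intro k
    show δbar k = _
    rw [hδbar, PiLp.smul_apply, smul_eq_mul]
    congr 1
    rw [WithLp.ofLp_sum]
    exact Finset.sum_apply k Finset.univ fun n => δ n
  -- coordinate formula for the updates
  have hcoord : ∀ (x : EuclideanSpace ℝ (Fin d)),
      ((1 / (N : ℝ)) * ∑ n, (inner ℝ (δ n) x : ℝ)) = ∑ k, a k * x k := by
    intro x
    have hin : ∀ n, (inner ℝ (δ n) x : ℝ) = ∑ k, δ n k * x k := by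
      intro n
      simp [PiLp.inner_apply, RCLike.inner_apply, starRingEnd_apply, star_trivial, mul_comm]
    simp_rw [hin, hbar]
    rw [Finset.sum_comm, Finset.mul_sum]
    refine Finset.sum_congr rfl fun k _ => ?_
    rw [← Finset.sum_mul]
    ring
  have hdGc : ∀ ω i, dG ω i = (∑ k, a k * vG ω k) * vG ω i := by
    intro ω i
    rw [hdG ω]
    rw [show (((1 / (N : ℝ)) * ∑ n, (inner ℝ (δ n) (vG ω) : ℝ)) • vG ω) i
      = ((1 / (N : ℝ)) * ∑ n, (inner ℝ (δ n) (vG ω) : ℝ)) * vG ω i from rfl, hcoord (vG ω)]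
  have hdRc : ∀ ω i, dR ω i = (∑ k, a k * vR ω k) * vR ω i := by
    intro ω i
    rw [hdR ω]
    rw [show (((1 / (N : ℝ)) * ∑ n, (inner ℝ (δ n) (vR ω) : ℝ)) • vR ω) i
      = ((1 / (N : ℝ)) * ∑ n, (inner ℝ (δ n) (vR ω) : ℝ)) * vR ω i from rfl, hcoord (vR ω)]
  -- moments and integrability for the Gaussian side
  have hGint : ∀ i (n : ℕ), Integrable (fun ω => vG ω i ^ n) μ₁ :=
    fun i n => transfer_int (hGmeas i) (hGgauss i) n (integrable_pow_gauss n)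
  have hGm : ∀ i (n : ℕ), ∫ ω, vG ω i ^ n ∂μ₁ = ∫ x, x ^ n ∂(gaussianReal 0 1) :=
    fun i n => transfer_mom (hGmeas i) (hGgauss i) n
  have hGm1 : ∀ i, ∫ ω, vG ω i ∂μ₁ = 0 := by
    intro i
    have := (hGm i 1).trans moment_gauss1
    simpa using this
  have hGm2 : ∀ i, ∫ ω, vG ω i ^ 2 ∂μ₁ = 1 := fun i => (hGm i 2).trans moment_gauss2
  have hGm3 : ∀ i, ∫ ω, vG ω i ^ 3 ∂μ₁ = 0 := fun i => (hGm i 3).trans moment_gauss3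
  have hGm4 : ∀ i, ∫ ω, vG ω i ^ 4 ∂μ₁ = 3 := fun i => (hGm i 4).trans moment_gauss4
  -- moments and integrability for the Rademacher side
  have hRint : ∀ i (n : ℕ), Integrable (fun ω => vR ω i ^ n) μ₂ :=
    fun i n => transfer_int (hRmeas i) (hRrad i) n
      (integrable_rad _ (measurable_id.pow_const n))
  have hRm : ∀ i (n : ℕ), ∫ ω, vR ω i ^ n ∂μ₂ = ∫ x, x ^ n ∂rademacherLaw :=
    fun i n => transfer_mom (hRmeas i) (hRrad i) n
  have hRm1 : ∀ i, ∫ ω, vR ω i ∂μ₂ = 0 := by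
    intro i
    have := (hRm i 1).trans (moment_rad 1)
    simpa using this
  have hRm2 : ∀ i, ∫ ω, vR ω i ^ 2 ∂μ₂ = 1 := by
    intro i; have := (hRm i 2).trans (moment_rad 2); norm_num at this; exact this
  have hRm3 : ∀ i, ∫ ω, vR ω i ^ 3 ∂μ₂ = 0 := by
    intro i; have := (hRm i 3).trans (moment_rad 3); norm_num at this; exact this
  have hRm4 : ∀ i, ∫ ω, vR ω i ^ 4 ∂μ₂ = 1 := by
    intro i; have := (hRm i 4).trans (moment_rad 4); norm_num at this; exact this
  -- entries of the two covariance matrices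
  have hmeanG : ∀ i, ∫ ω, dG ω i ∂μ₁ = a i := by
    intro i
    rw [show (fun ω => dG ω i) = fun ω => (∑ k, a k * vG ω k) * vG ω i from
      funext fun ω => hdGc ω i]
    exact meanL hGmeas hGindep hGint hGm1 hGm2 a i
  have hmeanR : ∀ i, ∫ ω, dR ω i ∂μ₂ = a i := by
    intro i
    rw [show (fun ω => dR ω i) = fun ω => (∑ k, a k * vR ω k) * vR ω i from
      funext fun ω => hdRc ω i]
    exact meanL hRmeas hRindep hRint hRm1 hRm2 a i
  have hcovG : ∀ i j, ∫ ω, dG ω i * dG ω j ∂μ₁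
      = if i = j then (∑ k, a k ^ 2) + (3 - 1) * a i ^ 2 else 2 * (a i * a j) := by
    intro i j
    rw [show (fun ω => dG ω i * dG ω j)
      = fun ω => ((∑ k, a k * vG ω k) * vG ω i) * ((∑ l, a l * vG ω l) * vG ω j) from
      funext fun ω => by rw [hdGc ω i, hdGc ω j]]
    exact covL hGmeas hGindep hGint hGm1 hGm2 hGm3 hGm4 a i j
  have hcovR : ∀ i j, ∫ ω, dR ω i * dR ω j ∂μ₂
      = if i = j then (∑ k, a k ^ 2) + (1 - 1) * a i ^ 2 else 2 * (a i * a j) := by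
    intro i j
    rw [show (fun ω => dR ω i * dR ω j)
      = fun ω => ((∑ k, a k * vR ω k) * vR ω i) * ((∑ l, a l * vR ω l) * vR ω j) from
      funext fun ω => by rw [hdRc ω i, hdRc ω j]]
    exact covL hRmeas hRindep hRint hRm1 hRm2 hRm3 hRm4 a i j
  have hdiff : VarG - VarR = Matrix.diagonal (fun i => 2 * δbar i ^ 2) := by
    ext i j
    rw [Matrix.sub_apply, hVarG, hVarR, Matrix.of_apply, Matrix.of_apply,
      hcovG, hcovR, hmeanG, hmeanR, hmeanG, hmeanR, Matrix.diagonal_apply]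
    by_cases hij : i = j
    · subst hij
      simp only [if_pos rfl, ite_true, eq_self_iff_true, ha]
      ring
    · simp only [if_neg hij, ha]
      ring
  refine ⟨hdiff, ?_, ?_⟩
  · rw [hdiff]
    exact Matrix.posSemidef_diagonal_iff.2 fun i => by positivity
  · rw [hdiff, Matrix.trace_diagonal]
    have hnorm : ‖δbar‖ ^ 2 = ∑ i, δbar i ^ 2 := by
      rw [EuclideanSpace.norm_eq, Real.sq_sqrt (by positivity)]
      refine Finset.sum_congr rfl fun i _ => ?_
      rw [Real.norm_eq_abs, sq_abs]
    rw [hnorm, Finset.mul_sum]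
end

section
/- Let f_1, …, f_N : ℝ^d → ℝ be differentiable functions each of whose gradients is L-Lipschitz (‖∇f_n(x) − ∇f_n(x̂)‖ ≤ L‖x − x̂‖ for all x, x̂), and let f = (1/N) ∑_{n=1}^N f_n. Then for every x ∈ ℝ^d and every collection of points y_1, …, y_N ∈ ℝ^d: −⟨∇f(x), (1/N) ∑_{n=1}^N ∇f_n(y_n)⟩ ≤ −(1/2)‖∇f(x)‖² + (L²/(2N)) ∑_{n=1}^N ‖x − y_n‖². -/
open MeasureTheory

lemma grad_avg_sum {d N : ℕ} (f : Fin N → EuclideanSpace ℝ (Fin d) → ℝ)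
    (hdiff : ∀ n x, DifferentiableAt ℝ (f n) x)
    (F : EuclideanSpace ℝ (Fin d) → ℝ)
    (hF : F = fun x => (1 / (N : ℝ)) * ∑ n, f n x)
    (x : EuclideanSpace ℝ (Fin d)) :
    gradient F x = (1 / (N : ℝ)) • ∑ n, gradient (f n) x := by
  have h1 : ∀ n, HasFDerivAt (f n)
      (InnerProductSpace.toDual ℝ _ (gradient (f n) x)) x :=
    fun n => ((hdiff n x).hasGradientAt).hasFDerivAt
  have hsum : HasFDerivAt (fun z => ∑ n, f n z)
      (∑ n, InnerProductSpace.toDual ℝ _ (gradient (f n) x)) x :=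
    HasFDerivAt.fun_sum (fun n _ => h1 n)
  have hsm : HasFDerivAt F
      ((1 / (N : ℝ)) • ∑ n, InnerProductSpace.toDual ℝ _ (gradient (f n) x)) x := by
    rw [hF]
    exact hsum.const_smul (1 / (N : ℝ))
  have : HasGradientAt F ((1 / (N : ℝ)) • ∑ n, gradient (f n) x) x := by
    rw [hasGradientAt_iff_hasFDerivAt, _root_.map_smul, map_sum]
    exact hsm
  exact this.gradient

/-- **Inner-product bound between the global gradient and averaged local gradients.**
If each `f_n : ℝᵈ → ℝ` is differentiable with `L`-Lipschitz gradient and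
`f = (1/N) ∑_n f_n`, then for every `x` and all points `y_1, …, y_N`,
`−⟨∇f(x), (1/N) ∑_n ∇f_n(y_n)⟩ ≤ −(1/2)‖∇f(x)‖² + (L²/(2N)) ∑_n ‖x − y_n‖²`. -/
theorem fedscalar_gradient_inner_bound
    (d N : ℕ) (hN : 0 < N) (L : ℝ) (hL : 0 < L)
    (f : Fin N → EuclideanSpace ℝ (Fin d) → ℝ)
    (hdiff : ∀ n x, DifferentiableAt ℝ (f n) x)
    (hlip : ∀ n x x', ‖gradient (f n) x - gradient (f n) x'‖ ≤ L * ‖x - x'‖)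
    (F : EuclideanSpace ℝ (Fin d) → ℝ)
    (hF : F = fun x => (1 / (N : ℝ)) * ∑ n, f n x)
    (x : EuclideanSpace ℝ (Fin d)) (y : Fin N → EuclideanSpace ℝ (Fin d)) :
    -(inner ℝ (gradient F x) ((1 / (N : ℝ)) • ∑ n, gradient (f n) (y n)) : ℝ) ≤
      -(1 / 2) * ‖gradient F x‖ ^ 2 + L ^ 2 / (2 * N) * ∑ n, ‖x - y n‖ ^ 2 := by
  set a := gradient F x with ha
  set b := (1 / (N : ℝ)) • ∑ n, gradient (f n) (y n) with hb
  have hNpos : (0:ℝ) < N := Nat.cast_pos.mpr hN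
  -- step 1: polarization bound
  have h1 : -(inner ℝ a b : ℝ) ≤ -(1/2) * ‖a‖^2 + (1/2) * ‖a - b‖^2 := by
    have := norm_sub_sq_real a b
    have hb2 : (0:ℝ) ≤ ‖b‖^2 := sq_nonneg _
    nlinarith [this]
  -- step 2: a - b = (1/N) • ∑ (grad f n x - grad f n (y n))
  have h2 : a - b = (1 / (N : ℝ)) • ∑ n, (gradient (f n) x - gradient (f n) (y n)) := by
    rw [ha, grad_avg_sum f hdiff F hF x, hb, ← smul_sub, ← Finset.sum_sub_distrib]
  -- step 3: norm bound
  have h3 : ‖a - b‖^2 ≤ L^2 / N * ∑ n, ‖x - y n‖^2 := by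
    rw [h2]
    have hns : ‖(1 / (N : ℝ)) • ∑ n, (gradient (f n) x - gradient (f n) (y n))‖
        ≤ (1 / (N : ℝ)) * ∑ n, ‖gradient (f n) x - gradient (f n) (y n)‖ := by
      rw [norm_smul]
      gcongr
      · simp [abs_of_nonneg (le_of_lt (by positivity : (0:ℝ) < 1/(N:ℝ)))]
      · exact norm_sum_le _ _
    have hcs : (∑ n, ‖gradient (f n) x - gradient (f n) (y n)‖)^2
        ≤ (N : ℝ) * ∑ n, ‖gradient (f n) x - gradient (f n) (y n)‖^2 := by
      simpa [Finset.card_univ] using sq_sum_le_card_mul_sum_sq (s := Finset.univ)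
        (f := fun n => ‖gradient (f n) x - gradient (f n) (y n)‖)
    have hterm : ∑ n, ‖gradient (f n) x - gradient (f n) (y n)‖^2
        ≤ L^2 * ∑ n, ‖x - y n‖^2 := by
      rw [Finset.mul_sum]
      apply Finset.sum_le_sum
      intro n _
      have := hlip n x (y n)
      nlinarith [norm_nonneg (gradient (f n) x - gradient (f n) (y n)), norm_nonneg (x - y n)]
    have hnn : (0:ℝ) ≤ ‖(1 / (N : ℝ)) • ∑ n, (gradient (f n) x - gradient (f n) (y n))‖ :=
      norm_nonneg _
    have hsumnn : (0:ℝ) ≤ ∑ n, ‖gradient (f n) x - gradient (f n) (y n)‖ :=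
      Finset.sum_nonneg fun n _ => norm_nonneg _
    calc ‖(1 / (N : ℝ)) • ∑ n, (gradient (f n) x - gradient (f n) (y n))‖^2
        ≤ ((1 / (N : ℝ)) * ∑ n, ‖gradient (f n) x - gradient (f n) (y n)‖)^2 := by
          exact pow_le_pow_left₀ hnn hns 2
      _ = (1 / (N : ℝ))^2 * (∑ n, ‖gradient (f n) x - gradient (f n) (y n)‖)^2 := by ring
      _ ≤ (1 / (N : ℝ))^2 * ((N : ℝ) * ∑ n, ‖gradient (f n) x - gradient (f n) (y n)‖^2) := by
          gcongr
      _ ≤ (1 / (N : ℝ))^2 * ((N : ℝ) * (L^2 * ∑ n, ‖x - y n‖^2)) := by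
          gcongr
      _ = L^2 / N * ∑ n, ‖x - y n‖^2 := by field_simp
  have := h1
  have hfin : L^2 / (2*N) * ∑ n, ‖x - y n‖^2 = (1/2) * (L^2 / N * ∑ n, ‖x - y n‖^2) := by
    field_simp
  linarith [h1, h3]
end
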